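/- arXiv:1709.02944 — 3 statements merged into one kernel-verified Lean document; each statement's English description precedes it below -/
import Mathlib

section
/- For n ≥ 2 and any point i ∈ {1, ..., n}, the stabilizer Stab_i(n) is a maximal proper subgroup of S_n: Stab_i(n) ≠ S_n, and any subgroup H of S_n with Stab_i(n) ≤ H satisfies H = Stab_i(n) or H = S_n. -/
theorem stabilizer_maximal (n : ℕ) (hn : 2 ≤ n) (i : Fin n) :
    MulAction.stabilizer (Equiv.Perm (Fin n)) i ≠ ⊤ ∧
    ∀ H : Subgroup (Equiv.Perm (Fin n)),
      MulAction.stabilizer (Equiv.Perm (Fin n)) i ≤ H →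
      H = MulAction.stabilizer (Equiv.Perm (Fin n)) i ∨ H = ⊤ := by
  obtain ⟨j, hj⟩ : ∃ j : Fin n, j ≠ i := by
    have h1 : 1 < Fintype.card (Fin n) := by simpa using (show 1 < n by omega)
    obtain ⟨j, hj⟩ := Fintype.exists_ne_of_one_lt_card h1 i
    exact ⟨j, hj⟩
  constructor
  · intro h
    have hmem : Equiv.swap i j ∈ MulAction.stabilizer (Equiv.Perm (Fin n)) i :=
      h ▸ Subgroup.mem_top _
    rw [MulAction.mem_stabilizer_iff] at hmem
    simp only [Equiv.Perm.smul_def, Equiv.swap_apply_left] at hmem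
    exact hj hmem
  · intro H hH
    by_cases hHs : H ≤ MulAction.stabilizer (Equiv.Perm (Fin n)) i
    · exact Or.inl (le_antisymm hHs hH)
    · right
      obtain ⟨σ, hσH, hσs⟩ := SetLike.exists_of_lt (lt_of_le_of_ne hH (fun h => hHs h.ge))
      have hσi : σ i ≠ i := fun h => hσs (by simpa [MulAction.mem_stabilizer_iff] using h)
      rw [eq_top_iff]
      intro τ _
      have key : ∃ ρ ∈ H, ρ i = τ i := by
        by_cases hτ : τ i = i
        · exact ⟨1, one_mem H, by simp [hτ]⟩
        · by_cases he : σ i = τ i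
          · exact ⟨σ, hσH, he⟩
          · refine ⟨Equiv.swap (σ i) (τ i) * σ, H.mul_mem (hH ?_) hσH, ?_⟩
            · rw [MulAction.mem_stabilizer_iff]
              simp [Equiv.Perm.smul_def, Equiv.swap_apply_of_ne_of_ne hσi.symm (Ne.symm hτ)]
            · simp [Equiv.swap_apply_left]
      obtain ⟨ρ, hρH, hρi⟩ := key
      have hst : ρ⁻¹ * τ ∈ MulAction.stabilizer (Equiv.Perm (Fin n)) i := by
        rw [MulAction.mem_stabilizer_iff]
        simp [Equiv.Perm.smul_def, ← hρi]
      have : ρ * (ρ⁻¹ * τ) ∈ H := H.mul_mem hρH (hH hst)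
      simpa using this
end

section
/- Let L be a lattice with least element ⊥ and let a be an atom of L that is also a neutral element. Then for any x ∈ L, x is a modular element of L if and only if a ⊔ x is a modular element of L. -/
theorem modular_iff_atom_join_modular {L : Type*} [Lattice L] [OrderBot L]
    (a : L) (ha : IsAtom a)
    (hn : ∀ y z : L, (a ⊓ y) ⊔ (y ⊓ z) ⊔ (z ⊓ a) = (a ⊔ y) ⊓ (y ⊔ z) ⊓ (z ⊔ a))
    (x : L) :
    (∀ y z : L, y ≤ z → (x ⊔ y) ⊓ z = (x ⊓ z) ⊔ y) ↔
    (∀ y z : L, y ≤ z → ((a ⊔ x) ⊔ y) ⊓ z = ((a ⊔ x) ⊓ z) ⊔ y) := by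
  -- a is join-prime
  have hJP : ∀ p q : L, a ≤ p ⊔ q → a ≤ p ∨ a ≤ q := by
    intro p q hpq
    rcases (ha.le_iff.mp (inf_le_left : a ⊓ p ≤ a)) with hp | hp
    · rcases (ha.le_iff.mp (inf_le_left : a ⊓ q ≤ a)) with hq | hq
      · exfalso
        have hmed := hn p q
        have hqa : q ⊓ a = ⊥ := by rw [inf_comm]; exact hq
        rw [hp, hqa] at hmed
        simp only [bot_sup_eq, sup_bot_eq] at hmed
        have hale : a ≤ p ⊓ q := by
          rw [hmed]
          exact le_inf (le_inf le_sup_left hpq) le_sup_right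
        have : a ⊓ p = a := inf_eq_left.mpr (hale.trans inf_le_left)
        exact ha.1 (by rw [← this, hp])
      · exact Or.inr (inf_eq_left.mp hq)
    · exact Or.inl (inf_eq_left.mp hp)
  -- distributivity of meets over joins with a
  have hD2 : ∀ p q : L, (a ⊔ p) ⊓ q = (a ⊓ q) ⊔ (p ⊓ q) := by
    intro p q
    rcases (ha.le_iff.mp (inf_le_left : a ⊓ q ≤ a)) with hq | hq
    · -- a ⊓ q = ⊥
      rcases (ha.le_iff.mp (inf_le_left : a ⊓ p ≤ a)) with hp | hp
      · -- both bot
        have hmed := hn p q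
        have hqa : q ⊓ a = ⊥ := by rw [inf_comm]; exact hq
        rw [hp, hqa] at hmed
        simp only [bot_sup_eq, sup_bot_eq] at hmed
        rw [hq, bot_sup_eq]
        refine le_antisymm ?_ (inf_le_inf_right q le_sup_right)
        calc (a ⊔ p) ⊓ q ≤ (a ⊔ p) ⊓ (p ⊔ q) ⊓ (q ⊔ a) :=
              le_inf (le_inf inf_le_left (inf_le_right.trans le_sup_right))
                (inf_le_right.trans le_sup_left)
          _ = p ⊓ q := hmed.symm
      · -- a ≤ p
        have : a ⊔ p = p := sup_eq_right.mpr (inf_eq_left.mp hp)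
        rw [this, hq, bot_sup_eq]
    · -- a ≤ q
      have haq : a ≤ q := inf_eq_left.mp hq
      have hmed := hn p q
      have h1 : (a ⊓ p) ⊔ (p ⊓ q) ⊔ (q ⊓ a) = a ⊔ (p ⊓ q) := by
        rw [inf_eq_right.mpr haq]  -- q ⊓ a = a
        rw [sup_comm]
        refine le_antisymm (sup_le le_sup_left (sup_le ?_ le_sup_right)) ?_
        · exact inf_le_left.trans le_sup_left
        · exact sup_le le_sup_left (le_sup_right.trans le_sup_right)
      have h2 : (a ⊔ p) ⊓ (p ⊔ q) ⊓ (q ⊔ a) = (a ⊔ p) ⊓ q := by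
        rw [sup_eq_left.mpr haq]  -- q ⊔ a = q
        refine le_antisymm (le_inf (inf_le_left.trans inf_le_left) inf_le_right) ?_
        exact le_inf (le_inf inf_le_left (inf_le_right.trans le_sup_right)) inf_le_right
      rw [h1, h2] at hmed
      rw [hq, hmed]
  constructor
  · intro hx y z hyz
    rw [sup_assoc, hD2 (x ⊔ y) z, hx y z hyz, hD2 x z, sup_assoc]
  · intro hax y z hyz
    refine le_antisymm ?_ (sup_le (le_inf (inf_le_left.trans le_sup_left) inf_le_right)
      (le_inf le_sup_right hyz))
    set w := (x ⊔ y) ⊓ z with hw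
    set u := (x ⊓ z) ⊔ y with hu
    have huw : u ≤ w := sup_le (le_inf (inf_le_left.trans le_sup_left) inf_le_right)
      (le_inf le_sup_right hyz)
    have h1 : w ≤ a ⊔ u := by
      have : ((a ⊔ x) ⊔ y) ⊓ z = ((a ⊓ z) ⊔ (x ⊓ z)) ⊔ y := by
        rw [hax y z hyz, hD2 x z]
      calc w ≤ ((a ⊔ x) ⊔ y) ⊓ z :=
            inf_le_inf_right z (sup_le (le_sup_left.trans (sup_le (le_sup_right.trans le_sup_left) le_sup_left)) le_sup_right)
        _ = ((a ⊓ z) ⊔ (x ⊓ z)) ⊔ y := this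
        _ ≤ a ⊔ u := sup_le (sup_le (inf_le_left.trans le_sup_left)
            (le_sup_left.trans le_sup_right)) (le_sup_right.trans le_sup_right)
    have hweq : w = (a ⊓ w) ⊔ u := by
      have h2 := hD2 u w
      rw [inf_eq_right.mpr h1, inf_eq_left.mpr huw] at h2
      exact h2
    rcases (ha.le_iff.mp (inf_le_left : a ⊓ w ≤ a)) with hb | hb
    · rw [hweq, hb, bot_sup_eq]
    · -- a ≤ w
      have haw : a ≤ w := inf_eq_left.mp hb
      have haxy : a ≤ x ⊔ y := haw.trans inf_le_left
      have hau : a ≤ u := by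
        rcases hJP x y haxy with hx' | hy'
        · exact (le_inf hx' (haw.trans inf_le_right)).trans le_sup_left
        · exact hy'.trans le_sup_right
      rw [hweq, hb, sup_eq_right.mpr hau]
end

section
/- Let L be a lattice, a ∈ L a neutral element, and [a) = {x ∈ L : a ≤ x} the principal coideal (filter) above a. If a ⊔ x is a modular element of the sublattice [a), then a ⊔ x is a modular element of L. -/
theorem modular_in_filter_implies_modular {L : Type*} [Lattice L]
    (a x : L)
    (hn : ∀ y z : L, (a ⊓ y) ⊔ (y ⊓ z) ⊔ (z ⊓ a) = (a ⊔ y) ⊓ (y ⊔ z) ⊓ (z ⊔ a))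
    (h : ∀ y z : L, a ≤ y → a ≤ z → y ≤ z →
      ((a ⊔ x) ⊔ y) ⊓ z = ((a ⊔ x) ⊓ z) ⊔ y) :
    ∀ y z : L, y ≤ z → ((a ⊔ x) ⊔ y) ⊓ z = ((a ⊔ x) ⊓ z) ⊔ y := by
  -- (A') median instance
  have A' : ∀ p q : L, a ⊔ (p ⊓ (a ⊔ q)) = (a ⊔ p) ⊓ (a ⊔ q) := by
    intro p q
    have H := hn p (a ⊔ q)
    have l1 : (a ⊓ p) ⊔ (p ⊓ (a ⊔ q)) ⊔ ((a ⊔ q) ⊓ a) = a ⊔ (p ⊓ (a ⊔ q)) := by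
      apply le_antisymm
      · refine sup_le (sup_le ?_ ?_) ?_
        · exact le_sup_of_le_left inf_le_left
        · exact le_sup_right
        · exact le_sup_of_le_left inf_le_right
      · exact sup_le (le_sup_of_le_right (le_inf le_sup_left le_rfl)) (le_sup_of_le_left le_sup_right)
    have l2 : (a ⊔ p) ⊓ (p ⊔ (a ⊔ q)) ⊓ ((a ⊔ q) ⊔ a) = (a ⊔ p) ⊓ (a ⊔ q) := by
      apply le_antisymm
      · exact le_inf (inf_le_of_left_le inf_le_left)
          (inf_le_of_right_le (sup_le le_rfl le_sup_left))
      · refine le_inf (le_inf inf_le_left ?_) (inf_le_of_right_le le_sup_left)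
        exact inf_le_of_right_le le_sup_right
    rw [l1, l2] at H
    exact H
  -- (D) dual distributivity
  have D : ∀ p q : L, (a ⊔ p) ⊓ (a ⊔ q) = a ⊔ (p ⊓ q) := by
    intro p q
    have H := hn p q
    have l1 : a ⊔ ((a ⊓ p) ⊔ (p ⊓ q) ⊔ (q ⊓ a)) = a ⊔ (p ⊓ q) := by
      apply le_antisymm
      · refine sup_le le_sup_left (sup_le (sup_le ?_ le_sup_right) ?_)
        · exact le_sup_of_le_left inf_le_left
        · exact le_sup_of_le_left inf_le_right
      · exact sup_le le_sup_left (le_sup_of_le_right (le_sup_of_le_left le_sup_right))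
    have l3 : (a ⊔ p) ⊓ (p ⊔ q) ⊓ (q ⊔ a) = ((p ⊔ q) ⊓ (a ⊔ p)) ⊓ (a ⊔ q) := by
      apply le_antisymm
      · refine le_inf (le_inf (inf_le_of_left_le inf_le_right) (inf_le_of_left_le inf_le_left)) ?_
        exact inf_le_of_right_le (sup_le le_sup_right le_sup_left)
      · refine le_inf (le_inf (inf_le_of_left_le inf_le_right) (inf_le_of_left_le inf_le_left)) ?_
        exact inf_le_of_right_le (sup_le le_sup_right le_sup_left)
    have l4 : a ⊔ ((p ⊔ q) ⊓ (a ⊔ p)) = a ⊔ p := by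
      have := A' (p ⊔ q) p
      rw [this]
      exact le_antisymm inf_le_right (le_inf (sup_le_sup_left le_sup_left a) le_rfl)
    have l5 : a ⊔ (((p ⊔ q) ⊓ (a ⊔ p)) ⊓ (a ⊔ q)) = (a ⊔ p) ⊓ (a ⊔ q) := by
      rw [A' ((p ⊔ q) ⊓ (a ⊔ p)) q, l4]
    calc (a ⊔ p) ⊓ (a ⊔ q) = a ⊔ (((p ⊔ q) ⊓ (a ⊔ p)) ⊓ (a ⊔ q)) := l5.symm
      _ = a ⊔ ((a ⊔ p) ⊓ (p ⊔ q) ⊓ (q ⊔ a)) := by rw [l3]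
      _ = a ⊔ ((a ⊓ p) ⊔ (p ⊓ q) ⊔ (q ⊓ a)) := by rw [← H]
      _ = a ⊔ (p ⊓ q) := l1
  intro y z hyz
  -- (M) instance: for u ≤ z, z ⊓ (a ⊔ u) = (a ⊓ z) ⊔ u
  have M : ∀ u : L, u ≤ z → z ⊓ (a ⊔ u) = (a ⊓ z) ⊔ u := by
    intro u hu
    have H := hn z u
    have l1 : (a ⊓ z) ⊔ (z ⊓ u) ⊔ (u ⊓ a) = (a ⊓ z) ⊔ u := by
      rw [inf_eq_right.mpr hu]
      apply le_antisymm
      · exact sup_le le_rfl (le_sup_of_le_right inf_le_left)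
      · exact le_sup_left
    have l2 : (a ⊔ z) ⊓ (z ⊔ u) ⊓ (u ⊔ a) = z ⊓ (a ⊔ u) := by
      rw [sup_eq_left.mpr hu]
      apply le_antisymm
      · exact le_inf (inf_le_of_left_le inf_le_right)
          (inf_le_of_right_le (sup_le le_sup_right le_sup_left))
      · refine le_inf (le_inf (le_sup_of_le_right inf_le_left) inf_le_left) ?_
        exact inf_le_of_right_le (sup_le le_sup_right le_sup_left)
    rw [l1, l2] at H
    exact H.symm
  -- apply h at (a ⊔ y, a ⊔ z)
  have hx := h (a ⊔ y) (a ⊔ z) le_sup_left le_sup_left (sup_le_sup_left hyz a)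
  have e1 : (a ⊔ x) ⊔ (a ⊔ y) = (a ⊔ x) ⊔ y := by
    apply le_antisymm
    · exact sup_le le_sup_left (sup_le (le_sup_of_le_left le_sup_left) le_sup_right)
    · exact sup_le le_sup_left (le_sup_of_le_right le_sup_right)
  have e2 : (a ⊔ x) ⊓ (a ⊔ z) = a ⊔ (x ⊓ z) := D x z
  rw [e1, e2] at hx
  -- hx : ((a ⊔ x) ⊔ y) ⊓ (a ⊔ z) = (a ⊔ (x ⊓ z)) ⊔ (a ⊔ y)
  have e3 : (a ⊔ (x ⊓ z)) ⊔ (a ⊔ y) = a ⊔ ((x ⊓ z) ⊔ y) := by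
    apply le_antisymm
    · refine sup_le (sup_le le_sup_left (le_sup_of_le_right le_sup_left))
        (sup_le le_sup_left (le_sup_of_le_right le_sup_right))
    · exact sup_le (le_sup_of_le_left le_sup_left)
        (sup_le (le_sup_of_le_left le_sup_right) (le_sup_of_le_right le_sup_right))
  rw [e3] at hx
  have hu : (x ⊓ z) ⊔ y ≤ z := sup_le inf_le_right hyz
  have key : ((a ⊔ x) ⊔ y) ⊓ z = (a ⊓ z) ⊔ ((x ⊓ z) ⊔ y) := by
    calc ((a ⊔ x) ⊔ y) ⊓ z = (((a ⊔ x) ⊔ y) ⊓ (a ⊔ z)) ⊓ z := by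
          rw [inf_assoc, inf_eq_right.mpr (le_sup_right : z ≤ a ⊔ z)]
      _ = (a ⊔ ((x ⊓ z) ⊔ y)) ⊓ z := by rw [hx]
      _ = z ⊓ (a ⊔ ((x ⊓ z) ⊔ y)) := inf_comm _ _
      _ = (a ⊓ z) ⊔ ((x ⊓ z) ⊔ y) := M _ hu
  apply le_antisymm
  · rw [key]
    refine sup_le (le_sup_of_le_left (inf_le_inf_right z le_sup_left)) ?_
    exact sup_le (le_sup_of_le_left (inf_le_inf_right z le_sup_right)) le_sup_right
  · exact sup_le (le_inf (inf_le_of_left_le le_sup_left) inf_le_right)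
      (le_inf le_sup_right hyz)
end
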